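/- Let G be a connected finite simple graph with n vertices and minimum degree δ. Then G has a restrained dominating set of cardinality at most (2(1 + ln(δ+1))/(δ+1))·n; that is, γ_r(G) ≤ 2n(1 + ln(δ+1))/(δ+1). -/

import Mathlib

/-- A set `D` is a restrained dominating set of `G` if every vertex not in `D`
is adjacent to a vertex in `D` and to a vertex outside `D`. -/
def IsRestrainedDominatingSet {V : Type*} (G : SimpleGraph V) (D : Finset V) : Prop :=
  (∀ v, v ∉ D → ∃ u ∈ D, G.Adj v u) ∧ (∀ v, v ∉ D → ∃ u, u ∉ D ∧ G.Adj v u)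

/-- The restrained domination number: minimum cardinality of a restrained dominating set. -/
noncomputable def restrainedDominationNumber {V : Type*} [Fintype V] (G : SimpleGraph V) : ℕ :=
  sInf {n | ∃ D : Finset V, IsRestrainedDominatingSet G D ∧ D.card = n}

open Finset

section WeightLemmas

variable {V : Type*} [Fintype V] [DecidableEq V]

private lemma RD.sum_pow_powerset (p q : ℝ) (U : Finset V) :
    ∑ B ∈ U.powerset, p ^ B.card * q ^ (U.card - B.card) = (p + q) ^ U.card := by
  classical
  induction U using Finset.induction_on with
  | empty => simp
  | insert a s ha ih =>
      rw [Finset.sum_powerset_insert ha]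
      have hcard : (insert a s).card = s.card + 1 := Finset.card_insert_of_notMem ha
      have h1 : ∑ B ∈ s.powerset, p ^ B.card * q ^ ((insert a s).card - B.card)
          = q * ∑ B ∈ s.powerset, p ^ B.card * q ^ (s.card - B.card) := by
        rw [Finset.mul_sum]
        refine Finset.sum_congr rfl fun B hB => ?_
        have hB' : B.card ≤ s.card := Finset.card_le_card (Finset.mem_powerset.mp hB)
        have h2 : (insert a s).card - B.card = (s.card - B.card) + 1 := by omega
        rw [h2, pow_succ]; ring
      have h2 : ∑ B ∈ s.powerset, p ^ (insert a B).card * q ^ ((insert a s).card - (insert a B).card)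
          = p * ∑ B ∈ s.powerset, p ^ B.card * q ^ (s.card - B.card) := by
        rw [Finset.mul_sum]
        refine Finset.sum_congr rfl fun B hB => ?_
        have hBs : B ⊆ s := Finset.mem_powerset.mp hB
        have haB : a ∉ B := fun h => ha (hBs h)
        have hc : (insert a B).card = B.card + 1 := Finset.card_insert_of_notMem haB
        have hB' : B.card ≤ s.card := Finset.card_le_card hBs
        rw [hc, hcard]
        have h3 : s.card + 1 - (B.card + 1) = s.card - B.card := by omega
        rw [h3, pow_succ]; ring
      rw [h1, h2, ih, hcard, pow_succ]; ring

private lemma RD.weight_sum_one (p q : ℝ) (hpq : p + q = 1) :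
    ∑ A ∈ (univ : Finset V).powerset, p ^ A.card * q ^ (Fintype.card V - A.card) = 1 := by
  have h := RD.sum_pow_powerset p q (univ : Finset V)
  rw [Finset.card_univ] at h
  rw [h, hpq, one_pow]

private lemma RD.marginal_le (p q : ℝ) (hp : 0 ≤ p) (hq : 0 ≤ q) (hpq : p + q = 1)
    (S₁ S₂ : Finset V) :
    ∑ A ∈ (univ : Finset V).powerset.filter (fun A => S₁ ⊆ A ∧ Disjoint A S₂),
        p ^ A.card * q ^ (Fintype.card V - A.card)
      ≤ p ^ S₁.card * q ^ S₂.card := by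
  classical
  by_cases hdis : Disjoint S₁ S₂
  · set U : Finset V := univ \ (S₁ ∪ S₂) with hU
    have hcards : S₁.card + S₂.card + U.card = Fintype.card V := by
      have h1 : (S₁ ∪ S₂).card = S₁.card + S₂.card := Finset.card_union_of_disjoint hdis
      have h2 : U.card = Fintype.card V - (S₁ ∪ S₂).card := by
        rw [hU, Finset.card_sdiff_of_subset (Finset.subset_univ _), Finset.card_univ]
      have h3 : (S₁ ∪ S₂).card ≤ Fintype.card V := by
        rw [← Finset.card_univ]; exact Finset.card_le_card (Finset.subset_univ _)
      omega
    have key : ∑ A ∈ (univ : Finset V).powerset.filter (fun A => S₁ ⊆ A ∧ Disjoint A S₂),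
        p ^ A.card * q ^ (Fintype.card V - A.card)
        = ∑ B ∈ U.powerset, p ^ (B.card + S₁.card) * q ^ (Fintype.card V - (B.card + S₁.card)) := by
      refine Finset.sum_nbij' (fun A => A \ S₁) (fun B => B ∪ S₁) ?_ ?_ ?_ ?_ ?_
      · intro A hA
        simp only [Finset.mem_filter, Finset.mem_powerset] at hA ⊢
        obtain ⟨-, hS₁A, hAS₂⟩ := hA
        intro x hx
        simp only [Finset.mem_sdiff] at hx
        simp only [hU, Finset.mem_sdiff, Finset.mem_univ, true_and, Finset.mem_union]
        exact fun h => h.elim hx.2 (fun h2 => (Finset.disjoint_left.mp hAS₂) hx.1 h2)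
      · intro B hB
        simp only [Finset.mem_powerset, hU] at hB
        simp only [Finset.mem_filter, Finset.mem_powerset]
        refine ⟨Finset.subset_univ _, Finset.subset_union_right, ?_⟩
        rw [Finset.disjoint_union_left]
        constructor
        · exact Finset.disjoint_left.mpr fun x hx hx2 => by
            have h := hB hx
            simp only [Finset.mem_sdiff, Finset.mem_union] at h
            exact h.2 (Or.inr hx2)
        · exact hdis
      · intro A hA
        simp only [Finset.mem_filter] at hA
        exact Finset.sdiff_union_of_subset hA.2.1
      · intro B hB
        simp only [Finset.mem_powerset, hU] at hB
        apply Finset.union_sdiff_cancel_right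
        exact Finset.disjoint_left.mpr fun x hx hx2 => by
          have h := hB hx
          simp only [Finset.mem_sdiff, Finset.mem_union] at h
          exact h.2 (Or.inl hx2)
      · intro A hA
        simp only [Finset.mem_filter] at hA
        have h1 : (A \ S₁).card = A.card - S₁.card := Finset.card_sdiff_of_subset hA.2.1
        have hle : S₁.card ≤ A.card := Finset.card_le_card hA.2.1
        rw [h1]
        congr 2 <;> omega
    rw [key]
    have expand : ∀ B ∈ U.powerset,
        p ^ (B.card + S₁.card) * q ^ (Fintype.card V - (B.card + S₁.card))
        = (p ^ S₁.card * q ^ S₂.card) * (p ^ B.card * q ^ (U.card - B.card)) := by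
      intro B hB
      have hBU : B.card ≤ U.card := Finset.card_le_card (Finset.mem_powerset.mp hB)
      have h4 : Fintype.card V - (B.card + S₁.card) = S₂.card + (U.card - B.card) := by omega
      rw [h4, pow_add, pow_add]; ring
    rw [Finset.sum_congr rfl expand, ← Finset.mul_sum, RD.sum_pow_powerset, hpq, one_pow, mul_one]
  · have hempty : (univ : Finset V).powerset.filter (fun A => S₁ ⊆ A ∧ Disjoint A S₂) = ∅ := by
      rw [Finset.filter_eq_empty_iff]
      intro A _ hA
      exact hdis (Finset.disjoint_of_subset_left hA.1 hA.2)
    rw [hempty, Finset.sum_empty]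
    positivity

private lemma RD.sum_rank_le [LinearOrder V] (p : ℝ) (hp : 0 ≤ p) (hp1 : p < 1)
    (N : Finset V) :
    ∑ w ∈ N, p ^ ((N.filter (fun u => u < w)).card) ≤ 1 / (1 - p) := by
  set r : V → ℕ := fun w => (N.filter (fun u => u < w)).card with hr
  have hmono : ∀ a ∈ N, ∀ b ∈ N, a < b → r a < r b := by
    intro a ha b hb hab
    apply Finset.card_lt_card
    constructor
    · intro u hu
      simp only [Finset.mem_filter] at hu ⊢
      exact ⟨hu.1, lt_trans hu.2 hab⟩
    · intro hsub
      have h := hsub (Finset.mem_filter.mpr ⟨ha, hab⟩)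
      exact absurd (Finset.mem_filter.mp h).2 (lt_irrefl a)
  have hinj : ∀ a ∈ N, ∀ b ∈ N, r a = r b → a = b := by
    intro a ha b hb hab
    by_contra hne
    rcases lt_or_gt_of_ne hne with h | h
    · exact absurd hab (Nat.ne_of_lt (hmono a ha b hb h))
    · exact absurd hab.symm (Nat.ne_of_lt (hmono b hb a ha h))
  have h1 : ∑ w ∈ N, p ^ r w = ∑ i ∈ N.image r, p ^ i := (Finset.sum_image hinj).symm
  have h2 : N.image r ⊆ Finset.range N.card := by
    intro i hi
    obtain ⟨w, hw, rfl⟩ := Finset.mem_image.mp hi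
    rw [Finset.mem_range]
    apply Finset.card_lt_card
    constructor
    · exact Finset.filter_subset _ _
    · intro hsub
      have h := hsub hw
      exact absurd (Finset.mem_filter.mp h).2 (lt_irrefl w)
  have h3 : ∑ i ∈ N.image r, p ^ i ≤ ∑ i ∈ Finset.range N.card, p ^ i :=
    Finset.sum_le_sum_of_subset_of_nonneg h2 (fun i _ _ => pow_nonneg hp i)
  have h4 : ∑ i ∈ Finset.range N.card, p ^ i ≤ 1 / (1 - p) := by
    rw [le_div_iff₀ (by linarith : (0:ℝ) < 1 - p)]
    have h := geom_sum_mul p N.card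
    have hpn : 0 ≤ p ^ N.card := pow_nonneg hp _
    nlinarith [h]
  calc ∑ w ∈ N, p ^ r w = ∑ i ∈ N.image r, p ^ i := h1
    _ ≤ _ := le_trans h3 h4

end WeightLemmas

section GraphSets

variable {V : Type*} [Fintype V] [DecidableEq V] (G : SimpleGraph V) [DecidableRel G.Adj]

/-- closed neighborhood -/
private def cN (v : V) : Finset V := insert v (G.neighborFinset v)

private lemma card_cN (v : V) : (cN G v).card = G.degree v + 1 := by
  rw [cN, Finset.card_insert_of_notMem (by simp), SimpleGraph.card_neighborFinset_eq_degree]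

private def Bset (A : Finset V) : Finset V := univ.filter (fun v => Disjoint A (cN G v))

private def Cset (A : Finset V) : Finset V :=
  univ.filter (fun v => v ∉ A ∪ Bset G A ∧ G.neighborFinset v ⊆ A ∪ Bset G A)

private def Dset (A : Finset V) : Finset V := A ∪ Bset G A ∪ Cset G A

private lemma Dset_restrained (A : Finset V) : IsRestrainedDominatingSet G (Dset G A) := by
  constructor
  · intro v hv
    simp only [Dset, Finset.mem_union, not_or] at hv
    obtain ⟨⟨hvA, hvB⟩, hvC⟩ := hv
    have hnd : ¬ Disjoint A (cN G v) := fun h =>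
      hvB (Finset.mem_filter.mpr ⟨Finset.mem_univ _, h⟩)
    obtain ⟨u, huA, huN⟩ := Finset.not_disjoint_iff.mp hnd
    have huv : u ≠ v := fun h => hvA (h ▸ huA)
    have hadj : G.Adj v u := by
      rcases Finset.mem_insert.mp huN with h | h
      · exact absurd h huv
      · exact (SimpleGraph.mem_neighborFinset G v u).mp h
    exact ⟨u, by simp only [Dset, Finset.mem_union]; exact Or.inl (Or.inl huA), hadj⟩
  · intro v hv
    simp only [Dset, Finset.mem_union, not_or] at hv
    obtain ⟨⟨hvA, hvB⟩, hvC⟩ := hv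
    have hvAB : v ∉ A ∪ Bset G A := by simp only [Finset.mem_union, not_or]; exact ⟨hvA, hvB⟩
    have hnsub : ¬ G.neighborFinset v ⊆ A ∪ Bset G A := fun h =>
      hvC (Finset.mem_filter.mpr ⟨Finset.mem_univ _, hvAB, h⟩)
    obtain ⟨u, huN, huAB⟩ := Finset.not_subset.mp hnsub
    have hadj : G.Adj v u := (SimpleGraph.mem_neighborFinset G v u).mp huN
    refine ⟨u, ?_, hadj⟩
    simp only [Dset, Finset.mem_union, not_or]
    have huC : u ∉ Cset G A := by
      intro hC
      have h := (Finset.mem_filter.mp hC).2.2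
      exact hvAB (h ((SimpleGraph.mem_neighborFinset G u v).mpr hadj.symm))
    simp only [Finset.mem_union, not_or] at huAB
    exact ⟨⟨huAB.1, huAB.2⟩, huC⟩

private lemma Dset_card (A : Finset V) :
    (Dset G A).card ≤ A.card + (Bset G A).card + (Cset G A).card :=
  le_trans (Finset.card_union_le _ _)
    (by exact Nat.add_le_add_right (Finset.card_union_le _ _) _)

private lemma Cset_cover {v : V} (A : Finset V) [LinearOrder V] (hv : v ∈ Cset G A) :
    (G.neighborFinset v ⊆ A) ∨ ∃ w ∈ G.neighborFinset v,
      ((G.neighborFinset v).filter (fun u => u < w) ⊆ A ∧ Disjoint A (cN G w)) := by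
  by_cases hsub : G.neighborFinset v ⊆ A
  · exact Or.inl hsub
  · right
    obtain ⟨u, huN, huA⟩ := Finset.not_subset.mp hsub
    set T : Finset V := (G.neighborFinset v).filter (· ∉ A) with hT
    have hTne : T.Nonempty := ⟨u, Finset.mem_filter.mpr ⟨huN, huA⟩⟩
    set w := T.min' hTne with hw
    have hwT : w ∈ T := T.min'_mem hTne
    have hwN : w ∈ G.neighborFinset v := (Finset.mem_filter.mp hwT).1
    have hwA : w ∉ A := (Finset.mem_filter.mp hwT).2
    refine ⟨w, hwN, ?_, ?_⟩
    · intro x hx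
      simp only [Finset.mem_filter] at hx
      by_contra hxA
      have hxT : x ∈ T := Finset.mem_filter.mpr ⟨hx.1, hxA⟩
      exact absurd hx.2 (not_lt.mpr (T.min'_le x hxT))
    · have h := (Finset.mem_filter.mp hv).2.2 hwN
      rcases Finset.mem_union.mp h with h1 | h1
      · exact absurd h1 hwA
      · exact (Finset.mem_filter.mp h1).2

private lemma expC [LinearOrder V] (p q : ℝ) (hp : 0 ≤ p) (hp1 : p < 1) (hq : 0 ≤ q)
    (hpq : p + q = 1) (hq0 : 0 < q) (δ : ℕ) (hdeg : ∀ u, δ ≤ G.degree u) (v : V) :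
    ∑ A ∈ (univ : Finset V).powerset,
        (p ^ A.card * q ^ (Fintype.card V - A.card)) * (if v ∈ Cset G A then 1 else 0)
      ≤ p ^ δ + q ^ δ := by
  set W : Finset V → ℝ := fun A => p ^ A.card * q ^ (Fintype.card V - A.card) with hWdef
  have hW : ∀ A, 0 ≤ W A := fun A => mul_nonneg (pow_nonneg hp _) (pow_nonneg hq _)
  have hq1 : q ≤ 1 := by linarith
  set N : Finset V := G.neighborFinset v with hN
  have point : ∀ A ∈ (univ : Finset V).powerset,
      W A * (if v ∈ Cset G A then 1 else 0)
        ≤ W A * (if N ⊆ A ∧ Disjoint A (∅ : Finset V) then 1 else 0)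
          + ∑ w ∈ N, W A * (if (N.filter (fun u => u < w) ⊆ A ∧ Disjoint A (cN G w)) then 1 else 0) := by
    intro A _
    have hterm : ∀ w ∈ N, 0 ≤ W A * (if (N.filter (fun u => u < w) ⊆ A ∧ Disjoint A (cN G w)) then 1 else 0) := by
      intro w _
      by_cases h : (N.filter (fun u => u < w) ⊆ A ∧ Disjoint A (cN G w)) <;> simp [h, hW A]
    have h0 : 0 ≤ W A * (if N ⊆ A ∧ Disjoint A (∅ : Finset V) then (1:ℝ) else 0) :=
      mul_nonneg (hW A) (by split <;> norm_num)
    by_cases hC : v ∈ Cset G A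
    · rcases Cset_cover G A hC with h | ⟨w, hw, h1, h2⟩
      · have he : (if N ⊆ A ∧ Disjoint A (∅ : Finset V) then (1:ℝ) else 0) = 1 := by
          simp [hN, h]
        rw [he]
        simp only [hC, if_pos, mul_one]
        exact le_add_of_nonneg_right (Finset.sum_nonneg hterm)
      · have hsum : W A * 1 ≤ ∑ w ∈ N, W A * (if (N.filter (fun u => u < w) ⊆ A ∧ Disjoint A (cN G w)) then 1 else 0) := by
          have h3 := Finset.single_le_sum hterm hw
          simpa [hN, h1, h2] using h3
        simp only [hC, if_pos, mul_one] at *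
        linarith
    · simp only [hC, if_neg, not_false_iff, mul_zero]
      exact add_nonneg h0 (Finset.sum_nonneg hterm)
  have step1 : ∑ A ∈ (univ : Finset V).powerset, W A * (if v ∈ Cset G A then 1 else 0)
      ≤ (∑ A ∈ (univ : Finset V).powerset, W A * (if N ⊆ A ∧ Disjoint A (∅ : Finset V) then 1 else 0))
        + ∑ w ∈ N, ∑ A ∈ (univ : Finset V).powerset,
            W A * (if (N.filter (fun u => u < w) ⊆ A ∧ Disjoint A (cN G w)) then 1 else 0) := by
    calc ∑ A ∈ (univ : Finset V).powerset, W A * (if v ∈ Cset G A then 1 else 0)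
        ≤ ∑ A ∈ (univ : Finset V).powerset, (W A * (if N ⊆ A ∧ Disjoint A (∅ : Finset V) then 1 else 0)
          + ∑ w ∈ N, W A * (if (N.filter (fun u => u < w) ⊆ A ∧ Disjoint A (cN G w)) then 1 else 0)) :=
          Finset.sum_le_sum point
      _ = _ := by rw [Finset.sum_add_distrib, Finset.sum_comm]
  have t1 : ∑ A ∈ (univ : Finset V).powerset, W A * (if N ⊆ A ∧ Disjoint A (∅ : Finset V) then 1 else 0)
      ≤ p ^ δ := by
    have hm := RD.marginal_le p q hp hq hpq N (∅ : Finset V)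
    rw [Finset.sum_filter] at hm
    simp only [Finset.card_empty, pow_zero, mul_one] at hm
    have heq : ∑ A ∈ (univ : Finset V).powerset, W A * (if N ⊆ A ∧ Disjoint A (∅ : Finset V) then 1 else 0)
        = ∑ A ∈ (univ : Finset V).powerset, (if N ⊆ A ∧ Disjoint A (∅ : Finset V) then W A else 0) := by
      refine Finset.sum_congr rfl fun A _ => ?_
      by_cases h : N ⊆ A ∧ Disjoint A (∅ : Finset V) <;> simp [h]
    rw [heq]
    refine le_trans hm ?_
    have hd : δ ≤ N.card := by rw [hN, SimpleGraph.card_neighborFinset_eq_degree]; exact hdeg v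
    exact pow_le_pow_of_le_one hp (le_of_lt hp1) hd
  have t2 : ∀ w ∈ N, ∑ A ∈ (univ : Finset V).powerset,
      W A * (if (N.filter (fun u => u < w) ⊆ A ∧ Disjoint A (cN G w)) then 1 else 0)
      ≤ p ^ ((N.filter (fun u => u < w)).card) * q ^ (δ + 1) := by
    intro w _
    have hm := RD.marginal_le p q hp hq hpq (N.filter (fun u => u < w)) (cN G w)
    rw [Finset.sum_filter] at hm
    have heq : ∑ A ∈ (univ : Finset V).powerset,
        W A * (if (N.filter (fun u => u < w) ⊆ A ∧ Disjoint A (cN G w)) then 1 else 0)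
        = ∑ A ∈ (univ : Finset V).powerset,
            (if (N.filter (fun u => u < w) ⊆ A ∧ Disjoint A (cN G w)) then W A else 0) := by
      refine Finset.sum_congr rfl fun A _ => ?_
      by_cases h : (N.filter (fun u => u < w) ⊆ A ∧ Disjoint A (cN G w)) <;> simp [h]
    rw [heq]
    refine le_trans hm ?_
    have hc : δ + 1 ≤ (cN G w).card := by rw [card_cN]; exact Nat.add_le_add_right (hdeg w) 1
    exact mul_le_mul_of_nonneg_left (pow_le_pow_of_le_one hq hq1 hc) (pow_nonneg hp _)
  have t3 : ∑ w ∈ N, p ^ ((N.filter (fun u => u < w)).card) * q ^ (δ + 1) ≤ q ^ δ := by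
    rw [← Finset.sum_mul]
    have hrank := RD.sum_rank_le p hp hp1 N
    have hq' : 0 < q ^ (δ + 1) := pow_pos hq0 _
    calc (∑ w ∈ N, p ^ ((N.filter (fun u => u < w)).card)) * q ^ (δ+1)
        ≤ (1 / (1 - p)) * q ^ (δ+1) := mul_le_mul_of_nonneg_right hrank (le_of_lt hq')
      _ = q ^ δ := by
          have h1p : 1 - p = q := by linarith
          rw [h1p, pow_succ]
          field_simp
  have t4 : ∑ w ∈ N, ∑ A ∈ (univ : Finset V).powerset,
      W A * (if (N.filter (fun u => u < w) ⊆ A ∧ Disjoint A (cN G w)) then 1 else 0)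
      ≤ q ^ δ := le_trans (Finset.sum_le_sum t2) t3
  refine le_trans step1 ?_
  linarith

end GraphSets

section Numeric

private lemma RD.exp_17_le : Real.exp 1.7 ≤ 6 := by
  have h1 : Real.exp 1 < 2.7182818286 := Real.exp_one_lt_d9
  have h10 : (Real.exp 1.7) ^ (10:ℕ) = Real.exp 17 := by
    rw [← Real.exp_nat_mul]; norm_num
  have h17 : Real.exp 17 = (Real.exp 1) ^ (17:ℕ) := by
    rw [← Real.exp_nat_mul]; norm_num
  have hb : (Real.exp 1) ^ (17:ℕ) ≤ 2.7182818286 ^ (17:ℕ) :=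
    pow_le_pow_left₀ (le_of_lt (Real.exp_pos 1)) (le_of_lt h1) 17
  have hc : (2.7182818286:ℝ) ^ (17:ℕ) ≤ 6 ^ (10:ℕ) := by norm_num
  have h : (Real.exp 1.7) ^ (10:ℕ) ≤ 6 ^ (10:ℕ) := by
    rw [h10, h17]; exact le_trans hb hc
  exact le_of_pow_le_pow_left₀ (by norm_num) (by norm_num) h

private lemma RD.exp_15_le : Real.exp 1.5 ≤ 5 := by
  have h1 : Real.exp 1 < 2.7182818286 := Real.exp_one_lt_d9
  have h10 : (Real.exp 1.5) ^ (2:ℕ) = Real.exp 3 := by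
    rw [← Real.exp_nat_mul]; norm_num
  have h17 : Real.exp 3 = (Real.exp 1) ^ (3:ℕ) := by
    rw [← Real.exp_nat_mul]; norm_num
  have hb : (Real.exp 1) ^ (3:ℕ) ≤ 2.7182818286 ^ (3:ℕ) :=
    pow_le_pow_left₀ (le_of_lt (Real.exp_pos 1)) (le_of_lt h1) 3
  have hc : (2.7182818286:ℝ) ^ (3:ℕ) ≤ 5 ^ (2:ℕ) := by norm_num
  have h : (Real.exp 1.5) ^ (2:ℕ) ≤ 5 ^ (2:ℕ) := by
    rw [h10, h17]; exact le_trans hb hc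
  exact le_of_pow_le_pow_left₀ (by norm_num) (by norm_num) h

private lemma RD.exp_half_le : Real.exp 0.5 ≤ 3 := by
  have h1 : Real.exp 1 < 2.7182818286 := Real.exp_one_lt_d9
  have h10 : (Real.exp 0.5) ^ (2:ℕ) = Real.exp 1 := by
    rw [← Real.exp_nat_mul]; norm_num
  have h : (Real.exp 0.5) ^ (2:ℕ) ≤ 3 ^ (2:ℕ) := by
    rw [h10]; nlinarith
  exact le_of_pow_le_pow_left₀ (by norm_num) (by norm_num) h

private lemma RD.small_case (δ : ℕ) (hδ : δ ≤ 4) :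
    ((δ:ℝ) + 1) ≤ 2 + 2 * Real.log ((δ:ℝ) + 1) := by
  interval_cases δ
  · norm_num
  · norm_num
    have h : 0 ≤ Real.log 2 := Real.log_nonneg (by norm_num)
    linarith
  · norm_num
    have h : (0.5:ℝ) ≤ Real.log 3 := by
      rw [Real.le_log_iff_exp_le (by norm_num)]
      exact RD.exp_half_le
    norm_num at h
    linarith
  · norm_num
    have h : (1:ℝ) ≤ Real.log 4 := by
      rw [Real.le_log_iff_exp_le (by norm_num)]
      have h2 := Real.exp_one_lt_d9
      norm_num at h2 ⊢
      linarith
    linarith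
  · norm_num
    have h : (1.5:ℝ) ≤ Real.log 5 := by
      rw [Real.le_log_iff_exp_le (by norm_num)]
      exact RD.exp_15_le
    norm_num at h
    linarith

private lemma RD.p_bounds (δ : ℕ) (hδ5 : 5 ≤ δ) :
    0 < Real.log ((δ:ℝ)+1) / ((δ:ℝ)+1) ∧ Real.log ((δ:ℝ)+1) / ((δ:ℝ)+1) < 1 := by
  have h5 : (5:ℝ) ≤ (δ:ℝ) := by exact_mod_cast hδ5
  have hx0 : (0:ℝ) < (δ:ℝ)+1 := by linarith
  constructor
  · exact div_pos (Real.log_pos (by linarith)) hx0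
  · rw [div_lt_one hx0]
    have h := Real.log_le_sub_one_of_pos hx0
    linarith

set_option maxHeartbeats 1000000 in
private lemma RD.main_numeric (δ : ℕ) (hδ5 : 5 ≤ δ) :
    Real.log ((δ:ℝ)+1) / ((δ:ℝ)+1)
      + (1 - Real.log ((δ:ℝ)+1) / ((δ:ℝ)+1)) ^ (δ+1)
      + ((Real.log ((δ:ℝ)+1) / ((δ:ℝ)+1)) ^ δ + (1 - Real.log ((δ:ℝ)+1) / ((δ:ℝ)+1)) ^ δ)
      ≤ 2*(1+Real.log ((δ:ℝ)+1))/((δ:ℝ)+1) := by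
  set x : ℝ := (δ:ℝ) + 1 with hxdef
  have hx6 : (6:ℝ) ≤ x := by
    have h5 : (5:ℝ) ≤ (δ:ℝ) := by exact_mod_cast hδ5
    rw [hxdef]; linarith
  have hx0 : (0:ℝ) < x := by linarith
  set L : ℝ := Real.log x with hL
  set p : ℝ := L / x with hpdef
  set q : ℝ := 1 - p with hqdef
  have hL17 : (1.7:ℝ) ≤ L := by
    rw [hL, Real.le_log_iff_exp_le hx0]
    exact le_trans RD.exp_17_le hx6
  have hL0 : 0 < L := by linarith
  have hp0 : 0 < p := div_pos hL0 hx0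
  have hLx : L ≤ x / Real.exp 1 := by
    have hpos : (0:ℝ) < x / Real.exp 1 := div_pos hx0 (Real.exp_pos 1)
    have h1 : Real.log (x / Real.exp 1) ≤ x / Real.exp 1 - 1 := Real.log_le_sub_one_of_pos hpos
    have h2 : Real.log (x / Real.exp 1) = L - 1 := by
      rw [hL, Real.log_div (ne_of_gt hx0) (Real.exp_ne_zero 1), Real.log_exp]
    linarith
  have hpe : p ≤ 1 / Real.exp 1 := by
    rw [hpdef, div_le_div_iff₀ hx0 (Real.exp_pos 1)]
    calc L * Real.exp 1 ≤ (x / Real.exp 1) * Real.exp 1 :=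
          mul_le_mul_of_nonneg_right hLx (le_of_lt (Real.exp_pos 1))
      _ = x := by field_simp
      _ = 1 * x := by ring
  have hexp27 : (2.7182818283:ℝ) < Real.exp 1 := Real.exp_one_gt_d9
  have hp37 : p ≤ 0.37 := by
    have h : (1:ℝ) / Real.exp 1 ≤ 0.37 := by
      rw [div_le_iff₀ (Real.exp_pos 1)]; nlinarith
    linarith
  have hp1 : p < 1 := by linarith
  have hq0 : 0 < q := by rw [hqdef]; linarith
  have hq63 : (0.63:ℝ) ≤ q := by rw [hqdef]; linarith
  have hq1 : q ≤ 1 := by rw [hqdef]; linarith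
  have hδx : (δ:ℝ) = x - 1 := by rw [hxdef]; ring
  have hqexp : q ≤ Real.exp (-p) := by
    have h := Real.add_one_le_exp (-p)
    rw [hqdef]; linarith
  have hqd : q ^ δ ≤ Real.exp p / x := by
    have h1 : q ^ δ ≤ (Real.exp (-p)) ^ δ := pow_le_pow_left₀ (le_of_lt hq0) hqexp δ
    have h2 : (Real.exp (-p)) ^ δ = Real.exp (-(p * δ)) := by
      rw [← Real.exp_nat_mul]; ring_nf
    have h3 : p * (δ:ℝ) = L - p := by
      rw [hpdef, hδx]; field_simp
    have h4 : Real.exp (-(p * (δ:ℝ))) = Real.exp p / x := by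
      rw [h3, neg_sub, Real.exp_sub, hL, Real.exp_log hx0]
    rw [h2, h4] at h1; exact h1
  have hpd : p ^ δ ≤ 4 / x ^ 2 := by
    have h1 : p ^ δ ≤ (1 / Real.exp 1) ^ δ := pow_le_pow_left₀ (le_of_lt hp0) hpe δ
    have h2 : (1 / Real.exp 1) ^ δ = Real.exp (-(δ:ℝ)) := by
      rw [one_div, ← Real.exp_neg, ← Real.exp_nat_mul]; ring_nf
    have h3 : Real.exp ((x-1)/2) ≥ (x+1)/2 := by
      have h := Real.add_one_le_exp ((x-1)/2)
      linarith
    have h4 : Real.exp (x-1) = (Real.exp ((x-1)/2)) ^ (2:ℕ) := by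
      rw [← Real.exp_nat_mul]; ring_nf
    have h5 : Real.exp (x-1) ≥ x^2/4 := by
      rw [h4]
      have hx2 : (0:ℝ) ≤ x/2 := by linarith
      have h6 : (x/2)^(2:ℕ) ≤ (Real.exp ((x-1)/2))^(2:ℕ) := by
        apply pow_le_pow_left₀ hx2
        linarith
      nlinarith
    have h6 : Real.exp (-(δ:ℝ)) = 1 / Real.exp (x-1) := by
      rw [hδx, Real.exp_neg, one_div]
    have h7 : (1:ℝ) / Real.exp (x-1) ≤ 4 / x^2 := by
      rw [div_le_div_iff₀ (Real.exp_pos _) (by positivity)]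
      nlinarith [Real.exp_pos (x-1)]
    calc p ^ δ ≤ (1 / Real.exp 1) ^ δ := h1
      _ = Real.exp (-(δ:ℝ)) := h2
      _ = 1 / Real.exp (x-1) := h6
      _ ≤ 4 / x^2 := h7
  have hqsucc : q ^ (δ+1) ≤ q ^ δ := pow_le_pow_of_le_one (le_of_lt hq0) hq1 (Nat.le_succ δ)
  have hEq : Real.exp p * q ≤ 1 := by
    have h1 : Real.exp p * q ≤ Real.exp p * Real.exp (-p) :=
      mul_le_mul_of_nonneg_left hqexp (le_of_lt (Real.exp_pos p))
    rw [← Real.exp_add] at h1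
    simpa using h1
  have hE2 : Real.exp p ≤ 1 + (100/63) * p := by
    have hkey : (1:ℝ) ≤ (1 + (100/63)*p) * q := by
      rw [hqdef]
      nlinarith [mul_nonneg (le_of_lt hp0) (sub_nonneg.mpr hp37)]
    exact (mul_le_mul_iff_of_pos_right hq0).mp (le_trans hEq hkey)
  have hpL6 : p ≤ L / 6 := by
    rw [hpdef]
    exact div_le_div_of_nonneg_left (le_of_lt hL0) (by norm_num) hx6
  have h4x : 4 / x ≤ 2/3 := by
    rw [div_le_iff₀ hx0]; linarith
  have hinner : L + 2 * Real.exp p + 4/x ≤ 2 + 2*L := by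
    nlinarith [hL17, hE2, hpL6, h4x]
  have hmul : x * (p + 2*(Real.exp p/x) + 4/x^2) = L + 2*Real.exp p + 4/x := by
    rw [hpdef]; field_simp
  have hmul2 : x * (2*(1+L)/x) = 2*(1+L) := by field_simp
  have hfin : p + 2*(Real.exp p/x) + 4/x^2 ≤ 2*(1+L)/x := by
    have hstep : x * (p + 2*(Real.exp p/x) + 4/x^2) ≤ x * (2*(1+L)/x) := by
      rw [hmul, hmul2]; linarith
    exact le_of_mul_le_mul_left hstep hx0
  have hexpx : 2*(Real.exp p / x) ≥ q^(δ+1) + q^δ := by linarith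
  linarith

end Numeric

/-- For a connected graph `G` with `n` vertices and minimum degree `δ`,
`γ_r(G) ≤ 2n(1 + ln(δ + 1))/(δ + 1)`. -/
theorem stmt_15 {V : Type*} [Fintype V] (G : SimpleGraph V) [DecidableRel G.Adj]
    (hconn : G.Connected) (n : ℕ) (hn : n = Fintype.card V)
    (δ : ℕ) (hδ : δ = G.minDegree) :
    (restrainedDominationNumber G : ℝ) ≤
      2 * (1 + Real.log (δ + 1)) / (δ + 1) * n := by
  classical
  subst hn
  have hne : Nonempty V := hconn.nonempty
  have hdeg : ∀ u : V, δ ≤ G.degree u := by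
    intro u; rw [hδ]; exact G.minDegree_le_degree u
  have hgamma : ∀ D : Finset V, IsRestrainedDominatingSet G D →
      (restrainedDominationNumber G : ℝ) ≤ (D.card : ℝ) := by
    intro D hD
    have hmem : D.card ∈ {m | ∃ D' : Finset V, IsRestrainedDominatingSet G D' ∧ D'.card = m} :=
      ⟨D, hD, rfl⟩
    exact_mod_cast Nat.sInf_le hmem
  have hx0 : (0:ℝ) < (δ:ℝ) + 1 := by positivity
  have hn0 : (0:ℝ) ≤ (Fintype.card V : ℝ) := Nat.cast_nonneg _
  by_cases hsmall : δ ≤ 4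
  · -- trivial case: D = univ
    have hDuniv : IsRestrainedDominatingSet G (Finset.univ : Finset V) :=
      ⟨fun v hv => absurd (Finset.mem_univ v) hv, fun v hv => absurd (Finset.mem_univ v) hv⟩
    have h1 : (restrainedDominationNumber G : ℝ) ≤ (Fintype.card V : ℝ) := by
      have h := hgamma Finset.univ hDuniv
      rwa [Finset.card_univ] at h
    have h2 := RD.small_case δ hsmall
    have h3 : (1:ℝ) ≤ 2*(1+Real.log ((δ:ℝ)+1))/((δ:ℝ)+1) := by
      rw [le_div_iff₀ hx0]; linarith
    calc (restrainedDominationNumber G : ℝ) ≤ (Fintype.card V : ℝ) := h1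
      _ = 1 * (Fintype.card V : ℝ) := (one_mul _).symm
      _ ≤ 2*(1+Real.log ((δ:ℝ)+1))/((δ:ℝ)+1) * (Fintype.card V : ℝ) :=
          mul_le_mul_of_nonneg_right h3 hn0
  · push_neg at hsmall
    have hδ5 : 5 ≤ δ := hsmall
    letI : LinearOrder V := LinearOrder.lift' (Fintype.equivFin V) (Fintype.equivFin V).injective
    obtain ⟨hp0, hp1⟩ := RD.p_bounds δ hδ5
    set p : ℝ := Real.log ((δ:ℝ)+1) / ((δ:ℝ)+1) with hpdef
    set q : ℝ := 1 - p with hqdef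
    have hp : 0 ≤ p := le_of_lt hp0
    have hq : 0 ≤ q := by rw [hqdef]; linarith
    have hq0 : 0 < q := by rw [hqdef]; linarith
    have hpq : p + q = 1 := by rw [hqdef]; ring
    set W : Finset V → ℝ := fun A => p ^ A.card * q ^ (Fintype.card V - A.card) with hWdef
    have hWnn : ∀ A, 0 ≤ W A := fun A => mul_nonneg (pow_nonneg hp _) (pow_nonneg hq _)
    set F : Finset V → ℝ :=
      fun A => (A.card : ℝ) + ((Bset G A).card : ℝ) + ((Cset G A).card : ℝ) with hFdef
    obtain ⟨A₀, hA₀mem, hA₀min⟩ :=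
      Finset.exists_min_image (univ : Finset V).powerset F ⟨∅, Finset.empty_mem_powerset _⟩
    -- γ ≤ F A₀
    have hgF : (restrainedDominationNumber G : ℝ) ≤ F A₀ := by
      refine le_trans (hgamma _ (Dset_restrained G A₀)) ?_
      have h := Dset_card G A₀
      rw [hFdef]
      push_cast
      exact_mod_cast h
    -- averaging
    have hsumW : ∑ A ∈ (univ : Finset V).powerset, W A = 1 := RD.weight_sum_one p q hpq
    have havg : F A₀ ≤ ∑ A ∈ (univ : Finset V).powerset, W A * F A := by
      calc F A₀ = (∑ A ∈ (univ : Finset V).powerset, W A) * F A₀ := by rw [hsumW, one_mul]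
        _ = ∑ A ∈ (univ : Finset V).powerset, W A * F A₀ := by rw [Finset.sum_mul]
        _ ≤ ∑ A ∈ (univ : Finset V).powerset, W A * F A :=
            Finset.sum_le_sum (fun A hA => mul_le_mul_of_nonneg_left (hA₀min A hA) (hWnn A))
    -- indicator rewriting
    have hcard_ind : ∀ (X : Finset V), ((X.card:ℝ)) = ∑ v ∈ univ, (if v ∈ X then (1:ℝ) else 0) := by
      intro X
      rw [Finset.sum_ite_mem]
      simp
    have hswap : ∀ (S : Finset V → Finset V),
        ∑ A ∈ (univ : Finset V).powerset, W A * ((S A).card : ℝ)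
        = ∑ v ∈ (univ : Finset V), ∑ A ∈ (univ : Finset V).powerset,
            W A * (if v ∈ S A then 1 else 0) := by
      intro S
      calc ∑ A ∈ (univ : Finset V).powerset, W A * ((S A).card : ℝ)
          = ∑ A ∈ (univ : Finset V).powerset, ∑ v ∈ (univ : Finset V),
              W A * (if v ∈ S A then 1 else 0) := by
            refine Finset.sum_congr rfl fun A _ => ?_
            rw [hcard_ind (S A), Finset.mul_sum]
        _ = _ := Finset.sum_comm
    -- E|A| ≤ n p
    have hEA : ∑ A ∈ (univ : Finset V).powerset, W A * ((A.card : ℝ))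
        ≤ (Fintype.card V : ℝ) * p := by
      have h := hswap (fun A => A)
      rw [h]
      have hper : ∀ v ∈ (univ : Finset V),
          ∑ A ∈ (univ : Finset V).powerset, W A * (if v ∈ A then 1 else 0) ≤ p := by
        intro v _
        have hm := RD.marginal_le p q hp hq hpq {v} (∅ : Finset V)
        rw [Finset.sum_filter] at hm
        simp only [Finset.card_singleton, Finset.card_empty, pow_one, pow_zero, mul_one] at hm
        refine le_trans (le_of_eq (Finset.sum_congr rfl fun A _ => ?_)) hm
        by_cases h2 : v ∈ A
        · simp [h2, Finset.singleton_subset_iff, hWdef]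
        · simp [h2, Finset.singleton_subset_iff]
      calc ∑ v ∈ (univ : Finset V), ∑ A ∈ (univ : Finset V).powerset,
            W A * (if v ∈ A then 1 else 0)
          ≤ ∑ _v ∈ (univ : Finset V), p := Finset.sum_le_sum hper
        _ = (Fintype.card V : ℝ) * p := by
            rw [Finset.sum_const, Finset.card_univ, nsmul_eq_mul]
    -- E|B| ≤ n q^(δ+1)
    have hEB : ∑ A ∈ (univ : Finset V).powerset, W A * (((Bset G A).card : ℝ))
        ≤ (Fintype.card V : ℝ) * q ^ (δ+1) := by
      rw [hswap (fun A => Bset G A)]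
      have hper : ∀ v ∈ (univ : Finset V),
          ∑ A ∈ (univ : Finset V).powerset, W A * (if v ∈ Bset G A then 1 else 0)
            ≤ q ^ (δ+1) := by
        intro v _
        have hm := RD.marginal_le p q hp hq hpq (∅ : Finset V) (cN G v)
        rw [Finset.sum_filter] at hm
        simp only [Finset.card_empty, pow_zero, one_mul] at hm
        have step : ∑ A ∈ (univ : Finset V).powerset, W A * (if v ∈ Bset G A then 1 else 0)
            ≤ q ^ ((cN G v).card) := by
          refine le_trans (le_of_eq (Finset.sum_congr rfl fun A _ => ?_)) hm
          by_cases h2 : v ∈ Bset G A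
          · have h3 : Disjoint A (cN G v) := (Finset.mem_filter.mp h2).2
            simp [h2, h3, Finset.empty_subset, hWdef]
          · have h3 : ¬ Disjoint A (cN G v) := fun hd =>
              h2 (Finset.mem_filter.mpr ⟨Finset.mem_univ _, hd⟩)
            simp [h2, h3]
        refine le_trans step ?_
        have hc : δ + 1 ≤ (cN G v).card := by
          rw [card_cN]; exact Nat.add_le_add_right (hdeg v) 1
        have hq1 : q ≤ 1 := by linarith
        exact pow_le_pow_of_le_one hq hq1 hc
      calc ∑ v ∈ (univ : Finset V), ∑ A ∈ (univ : Finset V).powerset,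
            W A * (if v ∈ Bset G A then 1 else 0)
          ≤ ∑ _v ∈ (univ : Finset V), q ^ (δ+1) := Finset.sum_le_sum hper
        _ = (Fintype.card V : ℝ) * q ^ (δ+1) := by
            rw [Finset.sum_const, Finset.card_univ, nsmul_eq_mul]
    -- E|C| ≤ n (p^δ + q^δ)
    have hEC : ∑ A ∈ (univ : Finset V).powerset, W A * (((Cset G A).card : ℝ))
        ≤ (Fintype.card V : ℝ) * (p ^ δ + q ^ δ) := by
      rw [hswap (fun A => Cset G A)]
      have hper : ∀ v ∈ (univ : Finset V),
          ∑ A ∈ (univ : Finset V).powerset, W A * (if v ∈ Cset G A then 1 else 0)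
            ≤ p ^ δ + q ^ δ := by
        intro v _
        exact expC G p q hp hp1 hq hpq hq0 δ hdeg v
      calc ∑ v ∈ (univ : Finset V), ∑ A ∈ (univ : Finset V).powerset,
            W A * (if v ∈ Cset G A then 1 else 0)
          ≤ ∑ _v ∈ (univ : Finset V), (p ^ δ + q ^ δ) := Finset.sum_le_sum hper
        _ = (Fintype.card V : ℝ) * (p ^ δ + q ^ δ) := by
            rw [Finset.sum_const, Finset.card_univ, nsmul_eq_mul]
    -- total expectation
    have hexp : ∑ A ∈ (univ : Finset V).powerset, W A * F A
        ≤ (Fintype.card V : ℝ) * (p + q ^ (δ+1) + (p ^ δ + q ^ δ)) := by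
      have hsplit : ∑ A ∈ (univ : Finset V).powerset, W A * F A
          = (∑ A ∈ (univ : Finset V).powerset, W A * ((A.card : ℝ)))
            + (∑ A ∈ (univ : Finset V).powerset, W A * (((Bset G A).card : ℝ)))
            + (∑ A ∈ (univ : Finset V).powerset, W A * (((Cset G A).card : ℝ))) := by
        rw [← Finset.sum_add_distrib, ← Finset.sum_add_distrib]
        refine Finset.sum_congr rfl fun A _ => ?_
        rw [hFdef]; ring
      have hrhs : (Fintype.card V : ℝ) * (p + q ^ (δ+1) + (p ^ δ + q ^ δ))
          = (Fintype.card V : ℝ) * p + (Fintype.card V : ℝ) * q ^ (δ+1)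
            + (Fintype.card V : ℝ) * (p ^ δ + q ^ δ) := by ring
      rw [hsplit, hrhs]
      linarith [hEA, hEB, hEC]
    -- numeric bound
    have hnum : p + q ^ (δ+1) + (p ^ δ + q ^ δ)
        ≤ 2*(1+Real.log ((δ:ℝ)+1))/((δ:ℝ)+1) := by
      rw [hqdef, hpdef]
      exact RD.main_numeric δ hδ5
    calc (restrainedDominationNumber G : ℝ) ≤ F A₀ := hgF
      _ ≤ ∑ A ∈ (univ : Finset V).powerset, W A * F A := havg
      _ ≤ (Fintype.card V : ℝ) * (p + q ^ (δ+1) + (p ^ δ + q ^ δ)) := hexp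
      _ ≤ (Fintype.card V : ℝ) * (2*(1+Real.log ((δ:ℝ)+1))/((δ:ℝ)+1)) :=
          mul_le_mul_of_nonneg_left hnum hn0
      _ = 2*(1+Real.log ((δ:ℝ)+1))/((δ:ℝ)+1) * (Fintype.card V : ℝ) := mul_comm _ _
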